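/- arXiv:0812.3948 — 2 statements merged into one kernel-verified Lean document; each statement's English description precedes it below -/
import Mathlib

section
/- Let f⁺, f⁻ : V → ℝ be Fréchet-differentiable on a normed space V with f⁺(ξ) ≠ f⁻(ξ) at every point of an open set U, and let F = −c·f⁺f⁻/(f⁺−f⁻) with c ≠ 0. Suppose ξ ∈ U is a critical point of F with F(ξ) = 0. Then exactly one of f⁺(ξ), f⁻(ξ) is zero, and ξ is a critical point of that function (f⁺ if f⁺(ξ)=0, f⁻ if f⁻(ξ)=0). -/
lemma aux_smul_cancel {M : Type*} [AddCommGroup M] [Module ℝ M] {a : ℝ} (ha : a ≠ 0)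
    {x : M} (h : a • x = 0) : x = 0 := by
  have h2 := congrArg (fun y => a⁻¹ • y) h
  simpa [smul_smul, inv_mul_cancel₀ ha] using h2

/-- A critical point of the factorised Lagrangian with zero value is a critical point of
exactly one of the two factors. -/
theorem factorised_lagrangian_critical_point
    {V : Type*} [NormedAddCommGroup V] [NormedSpace ℝ V]
    (fp fm : V → ℝ) (hfp : Differentiable ℝ fp) (hfm : Differentiable ℝ fm)
    (c : ℝ) (hc : c ≠ 0)
    (U : Set V) (hU : IsOpen U) (hne : ∀ x ∈ U, fp x ≠ fm x)
    (F : V → ℝ) (hF : ∀ x, F x = -c * (fp x * fm x) / (fp x - fm x))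
    (ξ : V) (hξ : ξ ∈ U) (hF0 : F ξ = 0) (hcrit : fderiv ℝ F ξ = 0) :
    (fp ξ = 0 ∧ fm ξ ≠ 0 ∧ fderiv ℝ fp ξ = 0) ∨
      (fm ξ = 0 ∧ fp ξ ≠ 0 ∧ fderiv ℝ fm ξ = 0) := by
  have hD : fp ξ - fm ξ ≠ 0 := sub_ne_zero.mpr (hne ξ hξ)
  -- the product fp ξ * fm ξ vanishes
  have hP : fp ξ * fm ξ = 0 := by
    have h := (hF ξ).symm.trans hF0
    rw [div_eq_zero_iff] at h
    rcases h with h | h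
    · rcases mul_eq_zero.mp h with h | h
      · exact absurd h (neg_ne_zero.mpr hc)
      · exact h
    · exact absurd h hD
  -- F is differentiable at ξ
  have hDdiff : DifferentiableAt ℝ (fun x => fp x - fm x) ξ := (hfp ξ).sub (hfm ξ)
  have hNdiff : DifferentiableAt ℝ (fun x => -c * (fp x * fm x)) ξ :=
    ((hfp ξ).mul (hfm ξ)).const_mul _
  have hFdiff : DifferentiableAt ℝ F ξ := by
    have : F = fun x => -c * (fp x * fm x) * (fp x - fm x)⁻¹ := by
      funext x; rw [hF x, div_eq_mul_inv]
    rw [this]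
    exact hNdiff.mul ((differentiableAt_inv hD).comp ξ hDdiff)
  -- the key identity of derivatives
  have heq : (fun x => (fp x - fm x) * F x) =ᶠ[nhds ξ] (fun x => -c * (fp x * fm x)) := by
    filter_upwards [hU.mem_nhds hξ] with x hx
    have hDx : fp x - fm x ≠ 0 := sub_ne_zero.mpr (hne x hx)
    rw [hF x, mul_div_cancel₀ _ hDx]
  have hder : fderiv ℝ (fun x => (fp x - fm x) * F x) ξ
      = fderiv ℝ (fun x => -c * (fp x * fm x)) ξ := heq.fderiv_eq
  rw [fderiv_fun_mul hDdiff hFdiff, fderiv_const_mul (a := fun y => fp y * fm y) ((hfp ξ).mul (hfm ξ)),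
    fderiv_fun_mul (hfp ξ) (hfm ξ), hcrit, hF0, smul_zero, zero_smul, add_zero] at hder
  -- hder : 0 = (-c) • (fp ξ • fderiv fm ξ + fm ξ • fderiv fp ξ)
  have hkey : fp ξ • fderiv ℝ fm ξ + fm ξ • fderiv ℝ fp ξ = 0 :=
    aux_smul_cancel (neg_ne_zero.mpr hc) hder.symm
  rcases mul_eq_zero.mp hP with h | h
  · left
    have hm : fm ξ ≠ 0 := fun h' => hD (by rw [h, h', sub_zero])
    refine ⟨h, hm, ?_⟩
    rw [h, zero_smul, zero_add] at hkey
    exact aux_smul_cancel hm hkey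
  · right
    have hp : fp ξ ≠ 0 := fun h' => hD (by rw [h, h', sub_zero])
    refine ⟨h, hp, ?_⟩
    rw [h, zero_smul, add_zero] at hkey
    exact aux_smul_cancel hp hkey
end

section
/- Let α, β be real 1-forms on a smooth manifold and φ a smooth real function, and set α' + iβ' = (α + iβ)e^{iφ}. Then α'∧dα' + β'∧dβ' = α∧dα + β∧dβ + 2 α∧β∧dφ. In particular, if dφ = 0 locally (φ locally constant), then α'∧dα' + β'∧dβ' = α∧dα + β∧dβ. -/
private lemma det3_expand (a b c d e f g h i : ℝ) :
    (!![a,b,c;d,e,f;g,h,i]).det = a*e*i - a*f*h - b*d*i + b*f*g + c*d*h - c*e*g := by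
  rw [Matrix.det_fin_three]
  norm_num [Matrix.cons_val_zero, Matrix.cons_val_one, Matrix.head_cons, Matrix.cons_val_two, Matrix.tail_cons]

/-- Pointwise rotation of a pair of 1-forms by angle φ:
α'∧dα' + β'∧dβ' = α∧dα + β∧dβ + 2α∧β∧dφ; in particular if dφ = 0 the combination
is unchanged. -/
theorem rotated_pair_axial_identity
    {E : Type*} [NormedAddCommGroup E] [NormedSpace ℝ E]
    (α β : E → E → ℝ) (φ : E → ℝ)
    (hα : ∀ v, Differentiable ℝ (fun x => α x v))
    (hβ : ∀ v, Differentiable ℝ (fun x => β x v))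
    (hφ : Differentiable ℝ φ)
    (α' β' : E → E → ℝ)
    (hα' : ∀ x v, α' x v = Real.cos (φ x) * α x v - Real.sin (φ x) * β x v)
    (hβ' : ∀ x v, β' x v = Real.sin (φ x) * α x v + Real.cos (φ x) * β x v)
    (dφ : E → E → ℝ) (hdφ : ∀ x v, dφ x v = fderiv ℝ φ x v)
    (d1 : (E → E → ℝ) → E → E → E → ℝ)
    (hd1 : ∀ γ x u v, d1 γ x u v =
      fderiv ℝ (fun y => γ y v) x u - fderiv ℝ (fun y => γ y u) x v)
    (w12 : (E → E → ℝ) → (E → E → E → ℝ) → E → E → E → E → ℝ)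
    (hw12 : ∀ γ ω x v0 v1 v2, w12 γ ω x v0 v1 v2 =
      γ x v0 * ω x v1 v2 - γ x v1 * ω x v0 v2 + γ x v2 * ω x v0 v1)
    (w3 : (E → E → ℝ) → (E → E → ℝ) → (E → E → ℝ) → E → E → E → E → ℝ)
    (hw3 : ∀ γ δ ε x v0 v1 v2, w3 γ δ ε x v0 v1 v2 = Matrix.det
      !![γ x v0, γ x v1, γ x v2; δ x v0, δ x v1, δ x v2; ε x v0, ε x v1, ε x v2]) :
    (∀ x v0 v1 v2,
      w12 α' (d1 α') x v0 v1 v2 + w12 β' (d1 β') x v0 v1 v2 =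
      w12 α (d1 α) x v0 v1 v2 + w12 β (d1 β) x v0 v1 v2
        + 2 * w3 α β dφ x v0 v1 v2) ∧
    (∀ x v0 v1 v2, fderiv ℝ φ x = 0 →
      w12 α' (d1 α') x v0 v1 v2 + w12 β' (d1 β') x v0 v1 v2 =
      w12 α (d1 α) x v0 v1 v2 + w12 β (d1 β) x v0 v1 v2) := by
  -- derivative of the rotated forms
  have hc : ∀ x, HasFDerivAt (fun y => Real.cos (φ y))
      ((-Real.sin (φ x)) • fderiv ℝ φ x) x := fun x =>
    (Real.hasDerivAt_cos (φ x)).comp_hasFDerivAt x (hφ x).hasFDerivAt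
  have hs : ∀ x, HasFDerivAt (fun y => Real.sin (φ y))
      ((Real.cos (φ x)) • fderiv ℝ φ x) x := fun x =>
    (Real.hasDerivAt_sin (φ x)).comp_hasFDerivAt x (hφ x).hasFDerivAt
  have hfa : ∀ x v u, fderiv ℝ (fun y => α' y v) x u =
      Real.cos (φ x) * fderiv ℝ (fun y => α y v) x u
      - Real.sin (φ x) * fderiv ℝ (fun y => β y v) x u
      - fderiv ℝ φ x u * (Real.sin (φ x) * α x v + Real.cos (φ x) * β x v) := by
    intro x v u
    have hfun : (fun y => α' y v)
        = fun y => Real.cos (φ y) * α y v - Real.sin (φ y) * β y v :=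
      funext fun y => hα' y v
    have h := ((hc x).mul ((hα v) x).hasFDerivAt).sub ((hs x).mul ((hβ v) x).hasFDerivAt)
    rw [hfun, HasFDerivAt.fderiv (f := fun y => Real.cos (φ y) * α y v - Real.sin (φ y) * β y v) h]
    simp [ContinuousLinearMap.add_apply, ContinuousLinearMap.sub_apply,
      ContinuousLinearMap.smul_apply, smul_eq_mul]
    ring
  have hfb : ∀ x v u, fderiv ℝ (fun y => β' y v) x u =
      Real.sin (φ x) * fderiv ℝ (fun y => α y v) x u
      + Real.cos (φ x) * fderiv ℝ (fun y => β y v) x u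
      + fderiv ℝ φ x u * (Real.cos (φ x) * α x v - Real.sin (φ x) * β x v) := by
    intro x v u
    have hfun : (fun y => β' y v)
        = fun y => Real.sin (φ y) * α y v + Real.cos (φ y) * β y v :=
      funext fun y => hβ' y v
    have h := ((hs x).mul ((hα v) x).hasFDerivAt).add ((hc x).mul ((hβ v) x).hasFDerivAt)
    rw [hfun, HasFDerivAt.fderiv (f := fun y => Real.sin (φ y) * α y v + Real.cos (φ y) * β y v) h]
    simp [ContinuousLinearMap.add_apply, ContinuousLinearMap.sub_apply,
      ContinuousLinearMap.smul_apply, smul_eq_mul]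
    ring
  have hda' : ∀ x u v, d1 α' x u v =
      Real.cos (φ x) * d1 α x u v - Real.sin (φ x) * d1 β x u v
      - dφ x u * (Real.sin (φ x) * α x v + Real.cos (φ x) * β x v)
      + dφ x v * (Real.sin (φ x) * α x u + Real.cos (φ x) * β x u) := by
    intro x u v
    rw [hd1, hd1, hd1, hfa, hfa, hdφ, hdφ]
    ring
  have hdb' : ∀ x u v, d1 β' x u v =
      Real.sin (φ x) * d1 α x u v + Real.cos (φ x) * d1 β x u v
      + dφ x u * (Real.cos (φ x) * α x v - Real.sin (φ x) * β x v)
      - dφ x v * (Real.cos (φ x) * α x u - Real.sin (φ x) * β x u) := by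
    intro x u v
    rw [hd1, hd1, hd1, hfb, hfb, hdφ, hdφ]
    ring
  have main : ∀ x v0 v1 v2,
      w12 α' (d1 α') x v0 v1 v2 + w12 β' (d1 β') x v0 v1 v2 =
      w12 α (d1 α) x v0 v1 v2 + w12 β (d1 β) x v0 v1 v2
        + 2 * w3 α β dφ x v0 v1 v2 := by
    intro x v0 v1 v2
    rw [hw12, hw12, hw12, hw12, hw3, det3_expand,
      hda', hda', hda', hdb', hdb', hdb', hα', hα', hα', hβ', hβ', hβ']
    linear_combination
      ((α x v0 * d1 α x v1 v2 - α x v1 * d1 α x v0 v2 + α x v2 * d1 α x v0 v1)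
      + (β x v0 * d1 β x v1 v2 - β x v1 * d1 β x v0 v2 + β x v2 * d1 β x v0 v1)
      + 2 * (α x v1 * β x v2 * dφ x v0 - α x v2 * β x v1 * dφ x v0
        + α x v2 * β x v0 * dφ x v1 - α x v0 * β x v2 * dφ x v1
        + α x v0 * β x v1 * dφ x v2 - α x v1 * β x v0 * dφ x v2))
      * Real.sin_sq_add_cos_sq (φ x)
  refine ⟨main, fun x v0 v1 v2 h0 => ?_⟩
  rw [main x v0 v1 v2]
  have hz : ∀ v, dφ x v = 0 := by intro v; rw [hdφ, h0]; simp
  rw [hw3, det3_expand]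
  simp [hz]
end
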